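/- Let A₁, A₂, B₁, B₂ be reals with A₁ ≠ B₁ and A₂ ≠ B₂. Define the 4×4 matrices Λ₁ = diag(A₁/(A₁-B₁), A₁/(A₁-B₁), 1, 1), Λ₃ = diag(1, 1, A₂/(A₂-B₂), A₂/(A₂-B₂)), Λ₂ = I + (B₂/(B₁-A₁))·(e₃e₁ᵀ + e₄e₂ᵀ), Λ₄ = I + (B₁/(B₂-A₂))·(e₁e₃ᵀ + e₂e₄ᵀ), and vectors U₁ = (B₁/(B₁-A₁))e₁, U₂ = (B₂/(A₁-B₁))e₃, U₃ = (B₂/(B₂-A₂))e₄, U₄ = (B₁/(A₂-B₂))e₂. Then the vector x_e = (1, 0, 0, 1)ᵀ is a fixed point of the composed affine map x ↦ Λ₄(Λ₃(Λ₂(Λ₁x + U₁) + U₂) + U₃) + U₄. -/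
import Mathlib


/-- (1,0,0,1) is a fixed point of the composed one-cycle IPA affine map for
the one-agent two-target system. -/
theorem stmt_9 (A₁ A₂ B₁ B₂ : ℝ) (h1 : A₁ ≠ B₁) (h2 : A₂ ≠ B₂) :
    let Λ₁ : Matrix (Fin 4) (Fin 4) ℝ :=
      !![A₁/(A₁-B₁), 0, 0, 0; 0, A₁/(A₁-B₁), 0, 0; 0, 0, 1, 0; 0, 0, 0, 1]
    let Λ₂ : Matrix (Fin 4) (Fin 4) ℝ :=
      !![1, 0, 0, 0; 0, 1, 0, 0; B₂/(B₁-A₁), 0, 1, 0; 0, B₂/(B₁-A₁), 0, 1]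
    let Λ₃ : Matrix (Fin 4) (Fin 4) ℝ :=
      !![1, 0, 0, 0; 0, 1, 0, 0; 0, 0, A₂/(A₂-B₂), 0; 0, 0, 0, A₂/(A₂-B₂)]
    let Λ₄ : Matrix (Fin 4) (Fin 4) ℝ :=
      !![1, 0, B₁/(B₂-A₂), 0; 0, 1, 0, B₁/(B₂-A₂); 0, 0, 1, 0; 0, 0, 0, 1]
    let U₁ : Fin 4 → ℝ := ![B₁/(B₁-A₁), 0, 0, 0]
    let U₂ : Fin 4 → ℝ := ![0, 0, B₂/(A₁-B₁), 0]
    let U₃ : Fin 4 → ℝ := ![0, 0, 0, B₂/(B₂-A₂)]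
    let U₄ : Fin 4 → ℝ := ![0, B₁/(A₂-B₂), 0, 0]
    let xe : Fin 4 → ℝ := ![1, 0, 0, 1]
    Λ₄.mulVec (Λ₃.mulVec (Λ₂.mulVec (Λ₁.mulVec xe + U₁) + U₂) + U₃) + U₄ = xe := by
  intro Λ₁ Λ₂ Λ₃ Λ₄ U₁ U₂ U₃ U₄ xe
  have d1 : A₁ - B₁ ≠ 0 := sub_ne_zero.mpr h1
  have d1' : B₁ - A₁ ≠ 0 := sub_ne_zero.mpr (Ne.symm h1)
  have d2 : A₂ - B₂ ≠ 0 := sub_ne_zero.mpr h2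
  have d2' : B₂ - A₂ ≠ 0 := sub_ne_zero.mpr (Ne.symm h2)
  have e1 : Λ₁.mulVec xe + U₁ = xe := by
    funext i; fin_cases i <;>
      simp [Λ₁, U₁, xe, Matrix.mulVec, dotProduct, Fin.sum_univ_four] <;>
      field_simp <;> ring
  have e2 : Λ₂.mulVec xe + U₂ = xe := by
    funext i; fin_cases i <;>
      simp [Λ₂, U₂, xe, Matrix.mulVec, dotProduct, Fin.sum_univ_four] <;>
      field_simp <;> ring
  have e3 : Λ₃.mulVec xe + U₃ = xe := by
    funext i; fin_cases i <;>
      simp [Λ₃, U₃, xe, Matrix.mulVec, dotProduct, Fin.sum_univ_four] <;>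
      field_simp <;> ring
  have e4 : Λ₄.mulVec xe + U₄ = xe := by
    funext i; fin_cases i <;>
      simp [Λ₄, U₄, xe, Matrix.mulVec, dotProduct, Fin.sum_univ_four] <;>
      field_simp <;> ring
  rw [e1, e2, e3, e4]
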